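/- The class L = {2ℕ} ∪ {{0, 2, 4, …, 2k, 2k+1} : k ∈ ℕ} is learnable by a total, set-driven, monotone, explanatory learner: there is a total computable h from finite subsets of ℕ to indices such that for every L ∈ L and every text T of L, the sequence n ↦ h(content(T[n])) converges to a single index e with W_e = L, and the hypothesis sequence satisfies the Mon condition on every text of L. -/

import Mathlib

/-- The `e`-th computably enumerable set: the domain of the `e`-th partial
computable function in the standard numbering of `Nat.Partrec.Code`. -/
def Wset (e : ℕ) : Set ℕ := {x | ((Denumerable.ofNat Nat.Partrec.Code e).eval x).Dom}

/-- A text: a function from ℕ to ℕ ∪ {#}, with `none` playing the role of the pause symbol #. -/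
def Text := ℕ → Option ℕ

/-- The content of a text: its range without the pause symbol. -/
def content (T : Text) : Set ℕ := {x | ∃ n, T n = some x}

/-- The initial segment `T[n]` of a text, as a finite sequence over ℕ ∪ {#}. -/
def seg (T : Text) (n : ℕ) : List (Option ℕ) := (List.range n).map T

/-- The content of a finite sequence over ℕ ∪ {#}. -/
def contentSeg (l : List (Option ℕ)) : Set ℕ := {x | (some x) ∈ l}

/-- The content of `T[n]` as a finite set. -/
def fset (T : Text) (n : ℕ) : Finset ℕ := ((List.range n).map T).reduceOption.toFinset

/-- The language L_{2k+1} = {0, 2, 4, …, 2k, 2k+1}. -/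
def Lodd (k : ℕ) : Set ℕ := {n | (Even n ∧ n ≤ 2 * k) ∨ n = 2 * k + 1}

/-- The even numbers 2ℕ. -/
def Ev : Set ℕ := {n | Even n}

/-- The class {2ℕ} ∪ { L_{2k+1} : k ∈ ℕ }. -/
def sepClass : Set (Set ℕ) := insert Ev {L | ∃ k : ℕ, L = Lodd k}

open Encodable Denumerable Nat.Partrec.Code
open Nat.Partrec (Code)

/- ### Auxiliary definitions for the learner -/

/-- Partial function with domain the even numbers. -/
def fEv : ℕ →. ℕ := fun x => bif decide (x % 2 = 0) then Part.some 0 else Part.none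

/-- Partial function, uncurried, with section domains the `Lodd k`. -/
def fLo : ℕ →. ℕ := fun p =>
  bif decide ((p.unpair.2 % 2 = 0 ∧ p.unpair.2 ≤ 2 * p.unpair.1) ∨ p.unpair.2 = 2 * p.unpair.1 + 1)
    then Part.some 0 else Part.none

theorem fEv_partrec : Nat.Partrec fEv := by
  have hc : Computable fun x : ℕ => decide (x % 2 = 0) :=
    (PrimrecRel.comp Primrec.eq (Primrec.nat_mod.comp Primrec.id (Primrec.const 2))
      (Primrec.const 0)).decide.to_comp
  exact Partrec.nat_iff.1 (Partrec.cond hc ((Computable.const 0).partrec) Partrec.none)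

theorem fLo_partrec : Nat.Partrec fLo := by
  have h1 : Primrec fun p : ℕ => p.unpair.1 := Primrec.fst.comp Primrec.unpair
  have h2 : Primrec fun p : ℕ => p.unpair.2 := Primrec.snd.comp Primrec.unpair
  have hA : PrimrecPred fun p : ℕ => p.unpair.2 % 2 = 0 :=
    PrimrecRel.comp Primrec.eq (Primrec.nat_mod.comp h2 (Primrec.const 2)) (Primrec.const 0)
  have hB : PrimrecPred fun p : ℕ => p.unpair.2 ≤ 2 * p.unpair.1 :=
    PrimrecRel.comp Primrec.nat_le h2 (Primrec.nat_mul.comp (Primrec.const 2) h1)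
  have hC : PrimrecPred fun p : ℕ => p.unpair.2 = 2 * p.unpair.1 + 1 :=
    PrimrecRel.comp Primrec.eq h2
      (Primrec.nat_add.comp (Primrec.nat_mul.comp (Primrec.const 2) h1) (Primrec.const 1))
  have hc : Computable fun p : ℕ =>
      decide ((p.unpair.2 % 2 = 0 ∧ p.unpair.2 ≤ 2 * p.unpair.1) ∨
        p.unpair.2 = 2 * p.unpair.1 + 1) :=
    ((hA.and hB).or hC).decide.to_comp
  exact Partrec.nat_iff.1 (Partrec.cond hc ((Computable.const 0).partrec) Partrec.none)

/-- A code for the even numbers. -/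
noncomputable def cEv : Code := (exists_code.1 fEv_partrec).choose

theorem cEv_eval : cEv.eval = fEv := (exists_code.1 fEv_partrec).choose_spec

/-- A code whose curries enumerate the `Lodd k`. -/
noncomputable def cLo : Code := (exists_code.1 fLo_partrec).choose

theorem cLo_eval : cLo.eval = fLo := (exists_code.1 fLo_partrec).choose_spec

theorem Wset_cEv : Wset (encode cEv) = Ev := by
  ext x
  simp only [Wset, Set.mem_setOf_eq, Denumerable.ofNat_encode, cEv_eval, fEv, Ev]
  by_cases h : x % 2 = 0 <;> simp [h, Nat.even_iff]

theorem Wset_cLo (k : ℕ) : Wset (encode (cLo.curry k)) = Lodd k := by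
  ext x
  simp only [Wset, Set.mem_setOf_eq, Denumerable.ofNat_encode, eval_curry, cLo_eval, fLo,
    Nat.unpair_pair, Lodd, Nat.even_iff]
  by_cases h : (x % 2 = 0 ∧ x ≤ 2 * k) ∨ x = 2 * k + 1 <;> simp [h]

/-- Sum of the odd elements of a finite set. -/
def oddSum (D : Finset ℕ) : ℕ := ∑ x ∈ D, if x % 2 = 1 then x else 0

/-- The learner. -/
noncomputable def learner (D : Finset ℕ) : ℕ :=
  if oddSum D = 0 then encode cEv else encode (cLo.curry (oddSum D / 2))

/- ### Computability of the learner -/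

def stepFn : ℕ × ℕ → ℕ → ℕ × ℕ := fun q m =>
  (m + q.1 + 1, q.2 + (if (m + q.1) % 2 = 1 then m + q.1 else 0))

theorem foldl_stepFn : ∀ (l : List ℕ) (p s : ℕ),
    (l.foldl stepFn (p, s)).2
      = s + ((Denumerable.raise' l p).map (fun x => if x % 2 = 1 then x else 0)).sum := by
  intro l
  induction l with
  | nil => intro p s; simp [Denumerable.raise']
  | cons m l ih =>
    intro p s
    simp [Denumerable.raise', List.foldl_cons, stepFn, ih, add_assoc]

set_option maxHeartbeats 1000000 in
theorem ofNat_finset (n : ℕ) :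
    ofNat (Finset ℕ) n
      = Finset.map (Denumerable.eqv ℕ).symm.toEmbedding
          (Denumerable.raise'Finset (ofNat (List ℕ) n) 0) :=
  ofNat_of_decode rfl

theorem oddSum_ofNat (n : ℕ) :
    oddSum (ofNat (Finset ℕ) n)
      = ((Denumerable.raise' (ofNat (List ℕ) n) 0).map
          (fun x => if x % 2 = 1 then x else 0)).sum := by
  rw [ofNat_finset, oddSum, Finset.sum_map]
  have : ∀ x : ℕ, (Denumerable.eqv ℕ).symm.toEmbedding x = x := fun x => by
    simp [Denumerable.eqv]
  simp only [this]
  rfl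

theorem learner_computable : Computable learner := by
  have hg : Primrec fun n : ℕ => ((ofNat (List ℕ) n).foldl stepFn (0, 0)).2 := by
    have hstep : Primrec₂ fun (_ : ℕ) (q : (ℕ × ℕ) × ℕ) => stepFn q.1 q.2 := by
      have hf : Primrec fun p : ℕ × ((ℕ × ℕ) × ℕ) => stepFn p.2.1 p.2.2 := by
        have hq1 : Primrec fun p : ℕ × ((ℕ × ℕ) × ℕ) => p.2.1.1 :=
          Primrec.fst.comp (Primrec.fst.comp Primrec.snd)
        have hq2 : Primrec fun p : ℕ × ((ℕ × ℕ) × ℕ) => p.2.1.2 :=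
          Primrec.snd.comp (Primrec.fst.comp Primrec.snd)
        have hm : Primrec fun p : ℕ × ((ℕ × ℕ) × ℕ) => p.2.2 := Primrec.snd.comp Primrec.snd
        have ha : Primrec fun p : ℕ × ((ℕ × ℕ) × ℕ) => p.2.2 + p.2.1.1 :=
          Primrec.nat_add.comp hm hq1
        have hcond : PrimrecPred fun p : ℕ × ((ℕ × ℕ) × ℕ) => (p.2.2 + p.2.1.1) % 2 = 1 :=
          PrimrecRel.comp Primrec.eq (Primrec.nat_mod.comp ha (Primrec.const 2)) (Primrec.const 1)
        exact Primrec.pair (Primrec.nat_add.comp ha (Primrec.const 1))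
          (Primrec.nat_add.comp hq2 (Primrec.ite hcond ha (Primrec.const 0)))
      exact hf.to₂
    have := Primrec.list_foldl (f := fun n : ℕ => ofNat (List ℕ) n)
      (g := fun _ : ℕ => ((0, 0) : ℕ × ℕ)) (h := fun (_ : ℕ) (q : (ℕ × ℕ) × ℕ) => stepFn q.1 q.2)
      (Primrec.ofNat (List ℕ)) (Primrec.const (0, 0)) hstep
    exact Primrec.snd.comp this
  have hF : Primrec fun n : ℕ =>
      (if ((ofNat (List ℕ) n).foldl stepFn (0, 0)).2 = 0 then encode cEv
       else encode (cLo.curry (((ofNat (List ℕ) n).foldl stepFn (0, 0)).2 / 2))) := by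
    have hz : PrimrecPred fun n : ℕ => ((ofNat (List ℕ) n).foldl stepFn (0, 0)).2 = 0 :=
      PrimrecRel.comp Primrec.eq hg (Primrec.const 0)
    exact Primrec.ite hz (Primrec.const (encode cEv))
      (Primrec.encode.comp (Nat.Partrec.Code.primrec₂_curry.comp (Primrec.const cLo)
        (Primrec.nat_div.comp hg (Primrec.const 2))))
  refine (Primrec.ofNat_iff.2 (hF.of_eq fun n => ?_)).to_comp
  have h2 : ((ofNat (List ℕ) n).foldl stepFn (0, 0)).2 = oddSum (ofNat (Finset ℕ) n) := by
    rw [foldl_stepFn, oddSum_ofNat]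
    simp
  rw [h2]
  rfl

/- ### Behaviour of `fset` and `oddSum` -/

theorem mem_fset {T : Text} {n x : ℕ} : x ∈ fset T n ↔ ∃ m < n, T m = some x := by
  simp only [fset, List.mem_toFinset, List.reduceOption_mem_iff, List.mem_map, List.mem_range]
  exact ⟨fun h => by obtain ⟨m, hm, e⟩ := List.mem_map.1 h; exact ⟨m, List.mem_range.1 hm, e⟩,
    fun ⟨m, hm, e⟩ => List.mem_map.2 ⟨m, List.mem_range.2 hm, e⟩⟩

theorem fset_mono {T : Text} {i j : ℕ} (hij : i ≤ j) : fset T i ⊆ fset T j := by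
  intro x hx
  rcases mem_fset.1 hx with ⟨m, hm, hTm⟩
  exact mem_fset.2 ⟨m, lt_of_lt_of_le hm hij, hTm⟩

theorem fset_subset_content {T : Text} {n : ℕ} : ↑(fset T n) ⊆ content T := by
  intro x hx
  rcases mem_fset.1 hx with ⟨m, _, hTm⟩
  exact ⟨m, hTm⟩

theorem oddSum_eq_zero {D : Finset ℕ} (h : ∀ x ∈ D, x % 2 = 0) : oddSum D = 0 :=
  Finset.sum_eq_zero fun x hx => by simp [h x hx]

theorem oddSum_of_subset_Lodd {D : Finset ℕ} {k : ℕ} (h : ↑D ⊆ Lodd k) :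
    oddSum D = if 2 * k + 1 ∈ D then 2 * k + 1 else 0 := by
  by_cases hm : 2 * k + 1 ∈ D
  · rw [if_pos hm, oddSum]
    have h1 : (∑ x ∈ D, if x % 2 = 1 then x else 0)
        = if (2 * k + 1) % 2 = 1 then 2 * k + 1 else 0 := by
      refine Finset.sum_eq_single (2 * k + 1) ?_ ?_
      · intro b hb hbne
        rcases h hb with hbl | hbl
        · simp [Nat.even_iff.1 hbl.1]
        · exact absurd hbl hbne
      · intro hc; exact absurd hm hc
    have h2 : (2 * k + 1) % 2 = 1 := by omega
    rw [h1, if_pos h2]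
  · rw [if_neg hm]
    apply oddSum_eq_zero
    intro x hx
    rcases h hx with hxl | hxl
    · exact Nat.even_iff.1 hxl.1
    · exact absurd (hxl ▸ hx) hm

theorem learner_of_even {D : Finset ℕ} (h : ↑D ⊆ Ev) : learner D = encode cEv := by
  have : oddSum D = 0 := oddSum_eq_zero fun x hx => Nat.even_iff.1 (h hx)
  simp [learner, this]

theorem learner_of_Lodd {D : Finset ℕ} {k : ℕ} (h : ↑D ⊆ Lodd k) (hm : 2 * k + 1 ∈ D) :
    learner D = encode (cLo.curry k) := by
  have hs : oddSum D = 2 * k + 1 := by rw [oddSum_of_subset_Lodd h, if_pos hm]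
  have : (2 * k + 1) / 2 = k := by omega
  simp [learner, hs, this]

/-- the class {2ℕ} ∪ {L_{2k+1} : k ∈ ℕ} is learnable by a total computable
set-driven learner which converges syntactically on each text of each language of the class
and whose hypothesis sequence is monotone on each such text. -/
theorem sepClass_RSdMonEx_learnable :
    ∃ h : Finset ℕ → ℕ, Computable h ∧
      ∀ L ∈ sepClass, ∀ T : Text, content T = L →
        (∃ e : ℕ, Wset e = L ∧ ∃ n₀ : ℕ, ∀ n ≥ n₀, h (fset T n) = e) ∧
        (∀ i j : ℕ, i ≤ j →
          Wset (h (fset T i)) ∩ content T ⊆ Wset (h (fset T j)) ∩ content T) := by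
  refine ⟨learner, learner_computable, ?_⟩
  intro L hL T hT
  rcases hL with hL | ⟨k, hL⟩
  · -- L = Ev
    subst hL
    have hconst : ∀ n, learner (fset T n) = encode cEv := fun n =>
      learner_of_even (fun x hx => hT ▸ fset_subset_content hx)
    refine ⟨⟨encode cEv, Wset_cEv, 0, fun n _ => hconst n⟩, ?_⟩
    intro i j _
    rw [hconst i, hconst j]
  · -- L = Lodd k
    subst hL
    have hsub : ∀ n, ↑(fset T n) ⊆ Lodd k := fun n x hx => hT ▸ fset_subset_content hx
    have hmem : (2 * k + 1 : ℕ) ∈ content T := by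
      rw [hT]; exact Or.inr rfl
    rcases hmem with ⟨n₁, hn₁⟩
    have hstage : ∀ n ≥ n₁ + 1, 2 * k + 1 ∈ fset T n := fun n hn =>
      mem_fset.2 ⟨n₁, by omega, hn₁⟩
    refine ⟨⟨encode (cLo.curry k), Wset_cLo k, n₁ + 1,
      fun n hn => learner_of_Lodd (hsub n) (hstage n hn)⟩, ?_⟩
    intro i j hij
    by_cases hz : oddSum (fset T i) = 0
    · -- earlier hypothesis is Ev
      have hi : learner (fset T i) = encode cEv := by simp [learner, hz]
      rw [hi, Wset_cEv]
      intro x ⟨hxe, hxc⟩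
      refine ⟨?_, hxc⟩
      by_cases hzj : oddSum (fset T j) = 0
      · have : learner (fset T j) = encode cEv := by simp [learner, hzj]
        rw [this, Wset_cEv]; exact hxe
      · have hsj : oddSum (fset T j) = 2 * k + 1 := by
          rw [oddSum_of_subset_Lodd (hsub j)] at hzj ⊢
          by_cases hm : 2 * k + 1 ∈ fset T j
          · rw [if_pos hm]
          · rw [if_neg hm] at hzj; exact absurd rfl hzj
        have : learner (fset T j) = encode (cLo.curry k) := by
          have hd : (2 * k + 1) / 2 = k := by omega
          simp [learner, hsj, hd]
        rw [this, Wset_cLo]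
        rw [hT] at hxc; exact hxc
    · -- earlier hypothesis is already Lodd k; later one is the same
      have hmi : 2 * k + 1 ∈ fset T i := by
        by_contra hm
        exact hz (by rw [oddSum_of_subset_Lodd (hsub i), if_neg hm])
      have hi : learner (fset T i) = encode (cLo.curry k) := learner_of_Lodd (hsub i) hmi
      have hj : learner (fset T j) = encode (cLo.curry k) :=
        learner_of_Lodd (hsub j) (fset_mono hij hmi)
      rw [hi, hj]
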